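/- Let γ : ℝ → ℝ³ be a real-analytic curve with γ'(t) ≠ 0 for all t. Suppose that near t = a one has γ'(t) × γ''(t) = (t−a)^N · c(t) with c real-analytic and c(a) ≠ 0 for some integer N ≥ 1, and det(γ'(t), γ''(t), γ'''(t)) = (t−a)^M · T(t) with T real-analytic for some integer M ≥ 3N. For t ≠ a let D(t) := (det(γ'(t), γ''(t), γ'''(t))·‖γ'(t)‖² / ‖γ'(t) × γ''(t)‖³)·γ'(t) + (γ'(t) × γ''(t))/‖γ'(t) × γ''(t)‖ be the normalized Darboux vector field. Then the map t ↦ sgn(t−a)^N · D(t), defined for t ≠ a near a, extends to a real-analytic vector field on a neighborhood of a. In particular, when N is odd (so sgn(t−a)^N = sgn(t−a)), D itself changes sign across the inflection point while the extended field is smooth, producing a non-orientable (Möbius) rectifying developable. -/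

import Mathlib

open Real

noncomputable abbrev E3 := EuclideanSpace ℝ (Fin 3)

/-- The cross product of vectors in Euclidean 3-space. -/
noncomputable def cross3 (u v : E3) : E3 :=
  (WithLp.equiv 2 (Fin 3 → ℝ)).symm
    ![u 1 * v 2 - u 2 * v 1, u 2 * v 0 - u 0 * v 2, u 0 * v 1 - u 1 * v 0]

/-- The dot product of vectors in Euclidean 3-space. -/
noncomputable def dot3 (u v : E3) : ℝ := u 0 * v 0 + u 1 * v 1 + u 2 * v 2

/-- The determinant of the 3×3 matrix with columns `u`, `v`, `w`. -/
noncomputable def det3 (u v w : E3) : ℝ := dot3 u (cross3 v w)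

/- Auxiliary lemmas -/

lemma analyticAt_sqrt' {x : ℝ} (hx : 0 < x) : AnalyticAt ℝ Real.sqrt x := by
  have hc : AnalyticAt ℂ (fun z : ℂ => z ^ (1/2 : ℂ)) (x : ℂ) := by
    apply AnalyticAt.cpow analyticAt_id analyticAt_const
    rw [Complex.mem_slitPlane_iff]
    left; simpa using hx
  have hr : AnalyticAt ℝ (fun z : ℂ => z ^ (1/2 : ℂ)) (x : ℂ) := hc.restrictScalars
  have h1 : AnalyticAt ℝ (fun y : ℝ => (((y : ℂ) ^ (1/2 : ℂ)).re)) x :=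
    (Complex.reCLM.analyticAt _).comp (hr.comp (Complex.ofRealCLM.analyticAt x))
  apply h1.congr
  filter_upwards [isOpen_Ioi.eventually_mem hx] with y hy
  rw [Real.sqrt_eq_rpow,
    show (1/2 : ℂ) = ((1/2 : ℝ) : ℂ) from by norm_num,
    ← Complex.ofReal_cpow (le_of_lt hy), Complex.ofReal_re]

lemma dot3_analytic {u v : ℝ → E3} {t : ℝ} (hu : AnalyticAt ℝ u t) (hv : AnalyticAt ℝ v t) :
    AnalyticAt ℝ (fun s => dot3 (u s) (v s)) t := by
  have hcoord : ∀ (w : ℝ → E3), AnalyticAt ℝ w t → ∀ i : Fin 3,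
      AnalyticAt ℝ (fun s => w s i) t := fun w hw i =>
    ((EuclideanSpace.proj i : E3 →L[ℝ] ℝ).analyticAt _).comp hw
  unfold dot3
  exact (((hcoord u hu 0).mul (hcoord v hv 0)).add
    ((hcoord u hu 1).mul (hcoord v hv 1))).add ((hcoord u hu 2).mul (hcoord v hv 2))

lemma dot3_self_nonneg (v : E3) : 0 ≤ dot3 v v := by
  have h : dot3 v v = v 0 ^ 2 + v 1 ^ 2 + v 2 ^ 2 := by unfold dot3; ring
  rw [h]; positivity

lemma norm_eq_sqrt_dot3 (v : E3) : ‖v‖ = Real.sqrt (dot3 v v) := by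
  rw [EuclideanSpace.norm_eq]
  congr 1
  simp [dot3, Fin.sum_univ_three, Real.norm_eq_abs, sq_abs, sq]

lemma dot3_self_eq_norm_sq (v : E3) : dot3 v v = ‖v‖ ^ 2 := by
  rw [norm_eq_sqrt_dot3, Real.sq_sqrt (dot3_self_nonneg v)]

lemma key_vec (s r : ℝ) (N K : ℕ) (hs : s ≠ 0) (hr : 0 < r) (T V : ℝ) (v w : E3) :
    (s ^ K * T * V / r ^ 3) • v + r⁻¹ • w
      = (Real.sign s) ^ N •
        ((s ^ (3 * N + K) * T * V / ((|s|) ^ N * r) ^ 3) • v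
          + ((|s|) ^ N * r)⁻¹ • (s ^ N • w)) := by
  have hx : s ^ N ≠ 0 := pow_ne_zero _ hs
  have hrne : r ≠ 0 := ne_of_gt hr
  have h3 : s ^ (3 * N + K) = (s ^ N) ^ 3 * s ^ K := by
    rw [pow_add, ← pow_mul, mul_comm N 3]
  simp only [smul_add, smul_smul]
  rcases lt_or_gt_of_ne hs with hneg | hpos
  · rw [Real.sign_of_neg hneg, abs_of_neg hneg, h3]
    rcases Nat.even_or_odd N with hNe | hNo
    · rw [hNe.neg_pow s, hNe.neg_one_pow, one_mul, one_mul]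
      congr 1
      · congr 1
        field_simp
      · congr 1
        field_simp
    · rw [hNo.neg_pow s, hNo.neg_one_pow,
        show (-(s ^ N) * r) ^ 3 = -((s ^ N * r) ^ 3) from by ring,
        show -(s ^ N) * r = -(s ^ N * r) from by ring, inv_neg, div_neg]
      congr 1
      · congr 1
        field_simp
      · congr 1
        field_simp
  · rw [Real.sign_of_pos hpos, abs_of_pos hpos, one_pow, one_mul, one_mul, h3]
    congr 1
    · congr 1
      field_simp
    · congr 1
      field_simp

/-- Randrup–Rogen: if the order N of the inflection point at t = a and the order M of
torsion satisfy M ≥ 3N, then (sgn(t-a))^N · D(t) extends real-analytically across a,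
where D is the normalized Darboux vector field. -/
theorem darboux_extends_analytically_across_inflection (γ : ℝ → E3) (a : ℝ)
    (N M : ℕ) (hN : 1 ≤ N) (hM : 3 * N ≤ M)
    (hγ : ∀ t, AnalyticAt ℝ γ t)
    (hreg : ∀ t, deriv γ t ≠ 0)
    (c : ℝ → E3) (T : ℝ → ℝ) (U : Set ℝ) (hU : U ∈ nhds a)
    (hc : ∀ t ∈ U, AnalyticAt ℝ c t) (hc0 : c a ≠ 0)
    (hw : ∀ t ∈ U, cross3 (deriv γ t) (deriv (deriv γ) t) = (t - a) ^ N • c t)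
    (hT : ∀ t ∈ U, AnalyticAt ℝ T t)
    (hΔ : ∀ t ∈ U,
      det3 (deriv γ t) (deriv (deriv γ) t) (deriv (deriv (deriv γ)) t) = (t - a) ^ M * T t) :
    ∃ (E : ℝ → E3) (V : Set ℝ), V ∈ nhds a ∧ (∀ t ∈ V, AnalyticAt ℝ E t) ∧
      ∀ t ∈ V, t ≠ a →
        E t = (Real.sign (t - a)) ^ N •
          ((det3 (deriv γ t) (deriv (deriv γ) t) (deriv (deriv (deriv γ)) t) * ‖deriv γ t‖ ^ 2
              / ‖cross3 (deriv γ t) (deriv (deriv γ) t)‖ ^ 3) • deriv γ t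
            + ‖cross3 (deriv γ t) (deriv (deriv γ) t)‖⁻¹ •
                cross3 (deriv γ t) (deriv (deriv γ) t)) := by
  have hγ' : ∀ t, AnalyticAt ℝ (deriv γ) t := by
    have h : AnalyticOnNhd ℝ γ Set.univ := fun t _ => hγ t
    exact fun t => h.deriv t (Set.mem_univ t)
  obtain ⟨W, hWU, hWopen, haW⟩ := mem_nhds_iff.mp hU
  set q : ℝ → ℝ := fun t => dot3 (c t) (c t) with hq_def
  have hqcont : ContinuousOn q W := fun t ht =>
    ((dot3_analytic (hc t (hWU ht)) (hc t (hWU ht))).continuousAt).continuousWithinAt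
  have hVopen : IsOpen (W ∩ q ⁻¹' Set.Ioi 0) :=
    hqcont.isOpen_inter_preimage hWopen isOpen_Ioi
  have hqa : 0 < q a := by
    show 0 < dot3 (c a) (c a)
    rw [dot3_self_eq_norm_sq]
    exact pow_pos (norm_pos_iff.mpr hc0) 2
  have haV : a ∈ W ∩ q ⁻¹' Set.Ioi 0 := ⟨haW, hqa⟩
  refine ⟨fun t => ((t - a) ^ (M - 3 * N) * T t * dot3 (deriv γ t) (deriv γ t)
      / Real.sqrt (dot3 (c t) (c t)) ^ 3) • deriv γ t
      + (Real.sqrt (dot3 (c t) (c t)))⁻¹ • c t,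
    W ∩ q ⁻¹' Set.Ioi 0, hVopen.mem_nhds haV, ?_, ?_⟩
  · intro t ht
    have htU : t ∈ U := hWU ht.1
    have hqt : 0 < q t := ht.2
    have hsqrt : AnalyticAt ℝ (fun s => Real.sqrt (dot3 (c s) (c s))) t :=
      (analyticAt_sqrt' hqt).comp (dot3_analytic (hc t htU) (hc t htU))
    have hsqrt_pos : 0 < Real.sqrt (dot3 (c t) (c t)) := Real.sqrt_pos.mpr hqt
    have h1 : AnalyticAt ℝ (fun s => (s - a) ^ (M - 3 * N) * T s
        * dot3 (deriv γ s) (deriv γ s) / Real.sqrt (dot3 (c s) (c s)) ^ 3) t := by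
      apply AnalyticAt.div
      · exact (((analyticAt_id.sub analyticAt_const).pow _).mul (hT t htU)).mul
          (dot3_analytic (hγ' t) (hγ' t))
      · exact hsqrt.pow 3
      · positivity
    exact (h1.smul (hγ' t)).add ((hsqrt.inv (ne_of_gt hsqrt_pos)).smul (hc t htU))
  · intro t ht hta
    have htU : t ∈ U := hWU ht.1
    have hqt : 0 < q t := ht.2
    have hs : t - a ≠ 0 := sub_ne_zero.mpr hta
    have hwpos : (0 : ℝ) < ‖c t‖ := by
      have h2 : 0 < dot3 (c t) (c t) := hqt
      rw [dot3_self_eq_norm_sq] at h2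
      refine norm_pos_iff.mpr fun h => ?_
      rw [h] at h2; simp at h2
    obtain ⟨K, rfl⟩ : ∃ K, M = 3 * N + K := ⟨M - 3 * N, by omega⟩
    simp only
    rw [hw t htU, hΔ t htU, norm_smul, Real.norm_eq_abs, abs_pow,
      ← norm_eq_sqrt_dot3, dot3_self_eq_norm_sq, Nat.add_sub_cancel_left]
    exact key_vec (t - a) ‖c t‖ N K hs hwpos (T t) (‖deriv γ t‖ ^ 2)
      (deriv γ t) (c t)
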